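/- For every pairwise nonnegative subset T of R = 𝒱″ ∪ 𝒧″ ∪ 𝒬″, the graph G_T (the simple graph with vertex set T in which distinct C, D ∈ T are adjacent if and only if ⟨C,D⟩ = 1) is acyclic, i.e., is a forest. (This reflects the fact that the connected components of each G_T are Dynkin diagrams of types A₁–A₅, D₄, D₅, or E₆, all of which are trees.) -/

import Mathlib

/-- `V = ℤ⁷`, with coordinate 0 corresponding to `L` and coordinates 1,…,6 to `E₁,…,E₆`. -/
abbrev V : Type := Fin 7 → ℤ

/-- The intersection form: `⟨x,y⟩ = x₀y₀ − Σᵢ xᵢyᵢ`. -/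
def form (x y : V) : ℤ := x 0 * y 0 - ∑ i : Fin 6, x i.succ * y i.succ

/-- The class `L` of a line. -/
def Lv : V := fun j => if j = 0 then 1 else 0

/-- The exceptional classes `E₁,…,E₆` (indexed by `Fin 6`). -/
def Ev (i : Fin 6) : V := fun j => if j = i.succ then 1 else 0

/-- The canonical class `K = −3L + E₁ + ⋯ + E₆`. -/
def Kv : V := -(3 : ℤ) • Lv + ∑ i : Fin 6, Ev i

/-- `𝒱″ = {Eᵢ − Eⱼ : 1 ≤ i < j ≤ 6}`. -/
def Vpp : Set V := {v | ∃ i j : Fin 6, i < j ∧ v = Ev i - Ev j}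

/-- `𝒧″ = {L − Eᵢ − Eⱼ − Eₖ : 1 ≤ i < j < k ≤ 6}`. -/
def Lpp : Set V := {v | ∃ i j k : Fin 6, i < j ∧ j < k ∧ v = Lv - Ev i - Ev j - Ev k}

/-- `𝒬″ = {2L − E₁ − ⋯ − E₆}`. -/
def Qpp : Set V := {v | v = (2 : ℤ) • Lv - ∑ i : Fin 6, Ev i}

/-- `R = 𝒱″ ∪ 𝒧″ ∪ 𝒬″`. -/
def Rset : Set V := Vpp ∪ Lpp ∪ Qpp

/-- A subset `T` is pairwise nonnegative if `⟨C,D⟩ ≥ 0` for all distinct `C,D ∈ T`. -/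
def PairwiseNonneg (T : Set V) : Prop := ∀ C ∈ T, ∀ D ∈ T, C ≠ D → 0 ≤ form C D

lemma form_comm (x y : V) : form x y = form y x := by
  simp [form, mul_comm]

/-- The graph `G_T`: vertices are the elements of `T`, and distinct `C, D ∈ T` are
adjacent if and only if `⟨C,D⟩ = 1`. -/
def GT (T : Set V) : SimpleGraph T where
  Adj C D := C ≠ D ∧ form (C : V) (D : V) = 1
  symm := by
    constructor
    rintro C D ⟨h1, h2⟩
    exact ⟨h1.symm, by rw [form_comm]; exact h2⟩
  loopless := by constructor; rintro C ⟨h, -⟩; exact h rfl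

/-! ### Auxiliary material -/

/-- An auxiliary vector `W` with `⟨c, W⟩ > 0` for every `c ∈ R`. -/
def Wv : V := fun j => if j = 0 then 100 else (j : ℤ)

lemma form_zero_left (y : V) : form 0 y = 0 := by simp [form]

lemma form_add_left (x x' y : V) : form (x + x') y = form x y + form x' y := by
  unfold form
  simp only [Pi.add_apply, add_mul, Finset.sum_add_distrib]
  ring

lemma form_sum_left {ι : Type*} (s : Finset ι) (f : ι → V) (y : V) :
    form (∑ i ∈ s, f i) y = ∑ i ∈ s, form (f i) y := by
  classical
  induction s using Finset.cons_induction with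
  | empty => simp [form_zero_left]
  | cons a s ha ih => rw [Finset.sum_cons, Finset.sum_cons, form_add_left, ih]

lemma form_sum_right {ι : Type*} (y : V) (s : Finset ι) (f : ι → V) :
    form y (∑ i ∈ s, f i) = ∑ i ∈ s, form y (f i) := by
  rw [form_comm, form_sum_left]
  exact Finset.sum_congr rfl fun i _ => form_comm _ _

set_option maxRecDepth 8000 in
lemma Vpp_props : ∀ i j : Fin 6, i < j →
    form (Ev i - Ev j) (Ev i - Ev j) = -2 ∧ form (Ev i - Ev j) Kv = 0 ∧
      0 < form (Ev i - Ev j) Wv := by decide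

set_option maxRecDepth 8000 in
lemma Lpp_props : ∀ i j k : Fin 6, i < j → j < k →
    form (Lv - Ev i - Ev j - Ev k) (Lv - Ev i - Ev j - Ev k) = -2 ∧
      form (Lv - Ev i - Ev j - Ev k) Kv = 0 ∧
      0 < form (Lv - Ev i - Ev j - Ev k) Wv := by decide

set_option maxRecDepth 8000 in
lemma Qpp_props :
    form ((2 : ℤ) • Lv - ∑ i : Fin 6, Ev i) ((2 : ℤ) • Lv - ∑ i : Fin 6, Ev i) = -2 ∧
      form ((2 : ℤ) • Lv - ∑ i : Fin 6, Ev i) Kv = 0 ∧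
      0 < form ((2 : ℤ) • Lv - ∑ i : Fin 6, Ev i) Wv := by decide

lemma Rset_props {c : V} (hc : c ∈ Rset) :
    form c c = -2 ∧ form c Kv = 0 ∧ 0 < form c Wv := by
  rcases hc with (⟨i, j, hij, rfl⟩ | ⟨i, j, k, hij, hjk, rfl⟩) | hc
  · exact Vpp_props i j hij
  · exact Lpp_props i j k hij hjk
  · rw [show c = (2 : ℤ) • Lv - ∑ i : Fin 6, Ev i from hc]
    exact Qpp_props

set_option maxHeartbeats 1000000 in
lemma sevenvar (a b c d e f g : ℤ) (h1 : 3 * a + (b + c + d + e + f + g) = 0)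
    (h2 : 0 ≤ a * a - (b * b + c * c + d * d + e * e + f * f + g * g)) :
    a = 0 ∧ b = 0 ∧ c = 0 ∧ d = 0 ∧ e = 0 ∧ f = 0 ∧ g = 0 := by
  have h4 : (b + c + d + e + f + g) * (b + c + d + e + f + g) = 9 * (a * a) := by
    have : b + c + d + e + f + g = -3 * a := by linarith
    rw [this]; ring
  have h3 : a * a ≤ 0 := by
    nlinarith [sq_nonneg (b - c), sq_nonneg (b - d), sq_nonneg (b - e), sq_nonneg (b - f),
      sq_nonneg (b - g), sq_nonneg (c - d), sq_nonneg (c - e), sq_nonneg (c - f),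
      sq_nonneg (c - g), sq_nonneg (d - e), sq_nonneg (d - f), sq_nonneg (d - g),
      sq_nonneg (e - f), sq_nonneg (e - g), sq_nonneg (f - g)]
  have ha : a = 0 := mul_self_eq_zero.mp (le_antisymm h3 (mul_self_nonneg a))
  subst ha
  have hb0 : b * b ≤ 0 := by
    linarith [mul_self_nonneg c, mul_self_nonneg d, mul_self_nonneg e, mul_self_nonneg f, mul_self_nonneg g]
  have hb : b = 0 := mul_self_eq_zero.mp (le_antisymm hb0 (mul_self_nonneg b))
  have hc0 : c * c ≤ 0 := by
    linarith [mul_self_nonneg b, mul_self_nonneg d, mul_self_nonneg e, mul_self_nonneg f, mul_self_nonneg g]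
  have hc : c = 0 := mul_self_eq_zero.mp (le_antisymm hc0 (mul_self_nonneg c))
  have hd0 : d * d ≤ 0 := by
    linarith [mul_self_nonneg b, mul_self_nonneg c, mul_self_nonneg e, mul_self_nonneg f, mul_self_nonneg g]
  have hd : d = 0 := mul_self_eq_zero.mp (le_antisymm hd0 (mul_self_nonneg d))
  have he0 : e * e ≤ 0 := by
    linarith [mul_self_nonneg b, mul_self_nonneg c, mul_self_nonneg d, mul_self_nonneg f, mul_self_nonneg g]
  have he : e = 0 := mul_self_eq_zero.mp (le_antisymm he0 (mul_self_nonneg e))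
  have hf0 : f * f ≤ 0 := by
    linarith [mul_self_nonneg b, mul_self_nonneg c, mul_self_nonneg d, mul_self_nonneg e, mul_self_nonneg g]
  have hf : f = 0 := mul_self_eq_zero.mp (le_antisymm hf0 (mul_self_nonneg f))
  have hg0 : g * g ≤ 0 := by
    linarith [mul_self_nonneg b, mul_self_nonneg c, mul_self_nonneg d, mul_self_nonneg e, mul_self_nonneg f]
  have hg : g = 0 := mul_self_eq_zero.mp (le_antisymm hg0 (mul_self_nonneg g))
  exact ⟨rfl, hb, hc, hd, he, hf, hg⟩

lemma Kv_eq : Kv = fun j => if j = 0 then -3 else 1 := by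
  funext j; fin_cases j <;> decide

/-- The form is negative definite on the orthogonal complement of `K`:
any `x` orthogonal to `K` with `⟨x,x⟩ ≥ 0` is zero. -/
lemma negdef (x : V) (hK : form x Kv = 0) (h2 : 0 ≤ form x x) : x = 0 := by
  have hK' : x 0 * (-3) - ∑ i : Fin 6, x i.succ = 0 := by
    simpa [form, Kv_eq, Fin.succ_ne_zero] using hK
  simp only [form, Fin.sum_univ_six] at hK' h2
  have s0 : (Fin.succ 0 : Fin 7) = 1 := by decide
  have s1 : (Fin.succ 1 : Fin 7) = 2 := by decide
  have s2 : (Fin.succ 2 : Fin 7) = 3 := by decide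
  have s3 : (Fin.succ 3 : Fin 7) = 4 := by decide
  have s4 : (Fin.succ 4 : Fin 7) = 5 := by decide
  have s5 : (Fin.succ 5 : Fin 7) = 6 := by decide
  rw [s0, s1, s2, s3, s4, s5] at hK' h2
  obtain ⟨h0, h1', h2', h3', h4', h5', h6'⟩ :=
    sevenvar (x 0) (x 1) (x 2) (x 3) (x 4) (x 5) (x 6) (by linarith) (by linarith)
  funext j
  fin_cases j
  · exact h0
  · exact h1'
  · exact h2'
  · exact h3'
  · exact h4'
  · exact h5'
  · exact h6'

lemma walk_support_getElem {V' : Type*} {G : SimpleGraph V'} {u v : V'} (p : G.Walk u v) :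
    ∀ (i : ℕ) (hi : i < p.support.length), p.support[i] = p.getVert i := by
  induction p with
  | nil => intro i hi; simp at hi; subst hi; simp
  | cons h q ih =>
    intro i hi
    cases i with
    | zero => simp
    | succ n =>
      simp only [SimpleGraph.Walk.support_cons, List.getElem_cons_succ,
        SimpleGraph.Walk.getVert_cons_succ]
      exact ih n (by simpa [SimpleGraph.Walk.support_cons] using Nat.lt_of_succ_lt_succ hi)

/-- for every pairwise nonnegative `T ⊆ R`, the graph `G_T` is acyclic
(a forest). -/
theorem GT_isAcyclic (T : Set V) (hTR : T ⊆ Rset) (hT : PairwiseNonneg T) :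
    (GT T).IsAcyclic := by
  classical
  intro u p hp
  set s : Finset T := p.support.tail.toFinset with hs_def
  have hsub : ∀ c : T, (c : V) ∈ Rset := fun c => hTR c.2
  -- key estimate: for any cycle `q` based at `x`, `0 ≤ ⟨x, Σ_{d ∈ q} d⟩`
  have key : ∀ (x : T) (q : (GT T).Walk x x), q.IsCycle →
      0 ≤ ∑ d ∈ q.support.tail.toFinset, form (x : V) (d : V) := by
    intro x q hq
    have h3 : 3 ≤ q.length := hq.three_le_length
    have hlen : q.support.tail.length = q.length := by
      simp [SimpleGraph.Walk.length_support]
    have hnodup : q.support.tail.Nodup := hq.support_nodup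
    have hget : ∀ (i : ℕ) (hi : i < q.support.tail.length),
        q.support.tail[i] = q.getVert (i + 1) := by
      intro i hi
      rw [List.getElem_tail, walk_support_getElem]
    set n := q.length with hn
    have hx_idx : n - 1 < q.support.tail.length := by omega
    have hy_idx : 0 < q.support.tail.length := by omega
    have hz_idx : n - 2 < q.support.tail.length := by omega
    set y : T := q.getVert 1 with hy_def
    set z : T := q.getVert (n - 1) with hz_def
    have hgx : q.support.tail[n-1]'hx_idx = x := by
      rw [hget (n-1) hx_idx, show n - 1 + 1 = n from by omega]
      exact q.getVert_length
    have hgy : q.support.tail[0]'hy_idx = y := by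
      rw [hget 0 hy_idx]
    have hgz : q.support.tail[n-2]'hz_idx = z := by
      rw [hget (n-2) hz_idx, show n - 2 + 1 = n - 1 from by omega]
    have hx_mem : x ∈ q.support.tail.toFinset := by
      have hmem := List.getElem_mem hx_idx
      rw [hgx] at hmem
      exact List.mem_toFinset.mpr hmem
    have hy_mem : y ∈ q.support.tail.toFinset := by
      have hmem := List.getElem_mem hy_idx
      rw [hgy] at hmem
      exact List.mem_toFinset.mpr hmem
    have hz_mem : z ∈ q.support.tail.toFinset := by
      have hmem := List.getElem_mem hz_idx
      rw [hgz] at hmem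
      exact List.mem_toFinset.mpr hmem
    have hadjxy : (GT T).Adj x y := by
      have := q.adj_getVert_succ (i := 0) (by omega)
      rwa [q.getVert_zero] at this
    have hadjzx : (GT T).Adj z x := by
      have := q.adj_getVert_succ (i := n - 1) (by omega)
      rwa [show n - 1 + 1 = n from by omega, q.getVert_length] at this
    have hyz : y ≠ z := by
      intro h
      have h02 : q.support.tail[0]'hy_idx = q.support.tail[n-2]'hz_idx := by
        rw [hgy, hgz]; exact h
      have := (List.Nodup.getElem_inj_iff hnodup).mp h02
      omega
    have hyx : y ≠ x := hadjxy.ne'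
    have hzx : z ≠ x := hadjzx.ne
    have hformxx : form (x : V) (x : V) = -2 := (Rset_props (hsub x)).1
    have hformxy : form (x : V) (y : V) = 1 := hadjxy.2
    have hformxz : form (x : V) (z : V) = 1 := by
      rw [form_comm]; exact hadjzx.2
    have hy_mem' : y ∈ (q.support.tail.toFinset).erase x :=
      Finset.mem_erase.mpr ⟨hyx, hy_mem⟩
    have hz_mem' : z ∈ ((q.support.tail.toFinset).erase x).erase y :=
      Finset.mem_erase.mpr ⟨Ne.symm hyz, Finset.mem_erase.mpr ⟨hzx, hz_mem⟩⟩
    rw [← Finset.add_sum_erase _ _ hx_mem, ← Finset.add_sum_erase _ _ hy_mem',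
      ← Finset.add_sum_erase _ _ hz_mem', hformxx, hformxy, hformxz]
    have hrest : 0 ≤ ∑ d ∈ ((((q.support.tail.toFinset).erase x).erase y).erase z),
        form (x : V) (d : V) := by
      apply Finset.sum_nonneg
      intro d hd
      have hdx : d ≠ x :=
        (Finset.mem_erase.mp (Finset.mem_erase.mp (Finset.mem_erase.mp hd).2).2).1
      exact hT x x.2 d d.2 (fun h => hdx (Subtype.ext h.symm))
    linarith
  -- the global argument
  have hS_nonneg : 0 ≤ form (∑ c ∈ s, (c : V)) (∑ c ∈ s, (c : V)) := by
    rw [form_sum_left]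
    apply Finset.sum_nonneg
    intro c hc
    rw [form_sum_right]
    have hcsup : c ∈ p.support :=
      List.mem_of_mem_tail (List.mem_toFinset.mp hc)
    have hset : (p.rotate c hcsup).support.tail.toFinset = s := by
      ext a
      rw [List.mem_toFinset, hs_def, List.mem_toFinset,
        (SimpleGraph.Walk.support_rotate p c hcsup).perm.mem_iff]
    have := key c (p.rotate c hcsup) (hp.rotate hcsup)
    rwa [hset] at this
  have hSK : form (∑ c ∈ s, (c : V)) Kv = 0 := by
    rw [form_sum_left]
    exact Finset.sum_eq_zero fun c _ => (Rset_props (hsub c)).2.1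
  have hS0 : (∑ c ∈ s, (c : V)) = 0 := negdef _ hSK hS_nonneg
  have hne : s.Nonempty := by
    have hlen : p.support.tail.length = p.length := by
      simp [SimpleGraph.Walk.length_support]
    have h3 : 3 ≤ p.length := hp.three_le_length
    have hnil : p.support.tail ≠ [] := by
      intro h; rw [h] at hlen; simp at hlen; omega
    exact ⟨p.support.tail.head hnil, List.mem_toFinset.mpr (List.head_mem hnil)⟩
  have hpos : 0 < form (∑ c ∈ s, (c : V)) Wv := by
    rw [form_sum_left]
    exact Finset.sum_pos (fun c _ => (Rset_props (hsub c)).2.2) hne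
  rw [hS0, form_zero_left] at hpos
  exact lt_irrefl 0 hpos
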